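/- Let Γ = [q; r_1,…,r_m; α] be a blockchain oceanic game with quota q = 1/2, major-miner weights r_1,…,r_m ≥ 0 and ocean mass α > 0 such that Σ_{j=1}^m r_j < 1/2 ≤ α. Then for every major miner i ∈ {1,…,m}, the value φ_i satisfies φ_i = (r_i/α^m) · Σ_{S ⊆ {1,…,m}\{i}} [ c_{|S|} · (∏_{j∈S} r_j) · (∏_{k∈{1,…,m}\({i}∪S)} (α − r_k)) ], where for a nonnegative integer s the coefficient c_s is defined by c_s := s! · Σ_{k=0}^{s} (−1)^k/(s−k)!. -/

import Mathlib

open MeasureTheory Finset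
open Polynomial

/-- The uniform probability measure on the unit cube `[0,1]^m`. -/
noncomputable def cubeMeasure (m : ℕ) : Measure (Fin m → ℝ) :=
  Measure.pi fun _ => volume.restrict (Set.Icc (0:ℝ) 1)

/-- The event that miner `i` is pivotal: with `r(x) = ∑_j r_j · 1{X_j < X_i}`,
`r(X_i) + α·X_i < q ≤ r(X_i) + α·X_i + r_i`. -/
def pivotEvent (m : ℕ) (q α : ℝ) (r : Fin m → ℝ) (i : Fin m) : Set (Fin m → ℝ) :=
  {x | (∑ j, if x j < x i then r j else 0) + α * x i < q ∧
       q ≤ (∑ j, if x j < x i then r j else 0) + α * x i + r i}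

/-- The value `φ_i` of major miner `i` in the blockchain oceanic game
`Γ = [q; r_1,…,r_m; α]`. -/
noncomputable def minerValue (m : ℕ) (q α : ℝ) (r : Fin m → ℝ) (i : Fin m) : ℝ :=
  (cubeMeasure m (pivotEvent m q α r i)).toReal

/-- The oceanic value `Φ = 1 - ∑_i φ_i`. -/
noncomputable def oceanicValue (m : ℕ) (q α : ℝ) (r : Fin m → ℝ) : ℝ :=
  1 - ∑ i, minerValue m q α r i

/-- The coefficient `c_s = s! · ∑_{k=0}^s (-1)^k/(s-k)!`. -/
noncomputable def oceanicCoeff (s : ℕ) : ℝ :=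
  (s.factorial : ℝ) * ∑ k ∈ Finset.range (s + 1), (-1 : ℝ) ^ k / ((s - k).factorial : ℝ)


lemma eval_of_natDegree_le_one {p : ℝ[X]} (h : p.natDegree ≤ 1) (c : ℝ) :
    p.eval c = p.coeff 0 + p.coeff 1 * c := by
  conv_lhs => rw [p.eq_X_add_C_of_natDegree_le_one h]
  simp only [eval_add, eval_mul, eval_C, eval_X]
  ring

lemma finite_diff {ι : Type*} [DecidableEq ι] (r : ι → ℝ) (U : Finset ι) :
    ∀ (g : ℝ[X]), g.natDegree ≤ U.card →
    ∑ S ∈ U.powerset, (-1 : ℝ)^((U \ S).card) * g.eval (∑ j ∈ S, r j)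
      = g.coeff U.card * (U.card).factorial * ∏ j ∈ U, r j := by
  induction U using Finset.induction with
  | empty =>
    intro g hg
    simp only [Finset.card_empty, Nat.le_zero] at hg ⊢
    rw [g.eq_C_of_natDegree_le_zero (le_of_eq hg)]
    simp
  | @insert a U ha ih =>
    intro g hg
    rw [Finset.sum_powerset_insert ha]
    set n := U.card with hn
    have hcard : (insert a U).card = n + 1 := Finset.card_insert_of_notMem ha
    rw [hcard] at hg
    set h : ℝ[X] := (taylor (r a) g : ℝ[X]) - g with hh
    have hcoeff : ∀ k, h.coeff k = (eval (r a) (hasseDeriv k g)) - g.coeff k := by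
      intro k; simp [hh, taylor_coeff]
    have hdegh : h.natDegree ≤ n := by
      rw [Polynomial.natDegree_le_iff_coeff_eq_zero]
      intro N hN
      have hdd : (hasseDeriv N g).natDegree ≤ 0 := by
        calc (hasseDeriv N g).natDegree ≤ g.natDegree - N := natDegree_hasseDeriv_le g N
        _ ≤ 0 := by omega
      have : hasseDeriv N g = C ((hasseDeriv N g).coeff 0) :=
        (hasseDeriv N g).eq_C_of_natDegree_le_zero hdd
      rw [hcoeff N, this]
      simp [hasseDeriv_coeff]
    have hcoeffn : h.coeff n = (n+1 : ℝ) * g.coeff (n+1) * r a := by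
      have hd1 : (hasseDeriv n g).natDegree ≤ 1 := by
        calc (hasseDeriv n g).natDegree ≤ g.natDegree - n := natDegree_hasseDeriv_le g n
        _ ≤ 1 := by omega
      rw [hcoeff n, eval_of_natDegree_le_one hd1]
      simp only [hasseDeriv_coeff]
      simp only [Nat.add_comm _ n, Nat.add_zero, Nat.choose_self, Nat.choose_succ_self_right]
      push_cast
      ring
    -- combine the two sums
    have key : ∀ S ∈ U.powerset,
        (-1:ℝ)^((insert a U \ S).card) * g.eval (∑ j ∈ S, r j)
        + (-1:ℝ)^((insert a U \ insert a S).card) * g.eval (∑ j ∈ insert a S, r j)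
        = (-1:ℝ)^((U \ S).card) * h.eval (∑ j ∈ S, r j) := by
      intro S hS
      rw [Finset.mem_powerset] at hS
      have haS : a ∉ S := fun hmem => ha (hS hmem)
      have h1 : insert a U \ S = insert a (U \ S) := by
        rw [Finset.insert_sdiff_of_notMem _ haS]
      have h2 : insert a U \ insert a S = U \ S := by
        ext x
        simp only [Finset.mem_sdiff, Finset.mem_insert]
        constructor
        · rintro ⟨hx1 | hx1, hx2⟩
          · exact absurd (Or.inl hx1) hx2
          · exact ⟨hx1, fun hxS => hx2 (Or.inr hxS)⟩
        · rintro ⟨hx1, hx2⟩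
          exact ⟨Or.inr hx1, fun hc => hc.elim (fun he => ha (he ▸ hx1)) hx2⟩
      have h3 : (insert a (U \ S)).card = (U \ S).card + 1 :=
        Finset.card_insert_of_notMem (fun hc => ha (Finset.mem_sdiff.mp hc).1)
      have h4 : ∑ j ∈ insert a S, r j = r a + ∑ j ∈ S, r j :=
        Finset.sum_insert haS
      rw [h1, h2, h3, h4, hh, pow_succ]
      simp only [eval_sub, taylor_apply, eval_comp, eval_add, eval_X, eval_C,
        add_comm (r a)]
      ring
    rw [← Finset.sum_add_distrib, Finset.sum_congr rfl key, ih h hdegh, hcoeffn,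
      Finset.prod_insert ha, hcard]
    push_cast [Nat.factorial_succ]
    ring


lemma regroup {ι M : Type*} [DecidableEq ι] [AddCommMonoid M] (A : Finset ι)
    (F : Finset ι → Finset ι → M) :
    ∑ S ∈ A.powerset, ∑ T ∈ (A \ S).powerset, F S T
      = ∑ U ∈ A.powerset, ∑ S ∈ U.powerset, F S (U \ S) := by
  rw [Finset.sum_sigma', Finset.sum_sigma']
  apply Finset.sum_nbij' (i := fun p => (⟨p.1 ∪ p.2, p.1⟩ : Σ _ : Finset ι, Finset ι))
    (j := fun p => (⟨p.2, p.1 \ p.2⟩ : Σ _ : Finset ι, Finset ι))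
  · rintro ⟨S, T⟩ hp
    simp only [Finset.mem_sigma, Finset.mem_powerset] at hp ⊢
    obtain ⟨hS, hT⟩ := hp
    exact ⟨Finset.union_subset hS (hT.trans Finset.sdiff_subset), Finset.subset_union_left⟩
  · rintro ⟨U, S⟩ hp
    simp only [Finset.mem_sigma, Finset.mem_powerset] at hp ⊢
    obtain ⟨hU, hS⟩ := hp
    exact ⟨hS.trans hU, Finset.sdiff_subset_sdiff hU (le_refl S)⟩
  · rintro ⟨S, T⟩ hp
    simp only [Finset.mem_sigma, Finset.mem_powerset] at hp
    obtain ⟨hS, hT⟩ := hp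
    have hdisj : Disjoint S T := Finset.disjoint_of_subset_right hT Finset.sdiff_disjoint.symm
    simp [Finset.union_sdiff_cancel_left hdisj]
  · rintro ⟨U, S⟩ hp
    simp only [Finset.mem_sigma, Finset.mem_powerset] at hp
    simp [Finset.union_sdiff_of_subset hp.2]
  · rintro ⟨S, T⟩ hp
    simp only [Finset.mem_sigma, Finset.mem_powerset] at hp
    have hdisj : Disjoint S T := Finset.disjoint_of_subset_right hp.2 Finset.sdiff_disjoint.symm
    rw [Finset.union_sdiff_cancel_left hdisj]


lemma alt_real (n : ℕ) :
    ∑ i ∈ Finset.range (n + 1), (-1 : ℝ)^i * (n.choose i) = if n = 0 then 1 else 0 := by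
  have := Int.alternating_sum_range_choose (n := n)
  have h2 : ((∑ i ∈ Finset.range (n + 1), (-1 : ℤ)^i * (n.choose i) : ℤ) : ℝ)
      = ∑ i ∈ Finset.range (n + 1), (-1 : ℝ)^i * (n.choose i) := by push_cast; rfl
  rw [← h2, this]
  split <;> simp

lemma delta_id (p k : ℕ) (hk : k ≤ p) :
    ∑ s ∈ Finset.range (p + 1), (-1 : ℝ)^s * (p.choose s) * (s.choose k)
      = if k = p then (-1 : ℝ)^p else 0 := by
  rw [Finset.range_eq_Ico,
    ← Finset.sum_Ico_consecutive _ (Nat.zero_le k) (by omega : k ≤ p + 1)]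
  have h0 : ∑ s ∈ Finset.Ico 0 k, (-1 : ℝ)^s * (p.choose s) * (s.choose k) = 0 := by
    apply Finset.sum_eq_zero
    intro s hs
    rw [Finset.mem_Ico] at hs
    rw [Nat.choose_eq_zero_of_lt hs.2]
    simp
  rw [h0, zero_add, Finset.sum_Ico_eq_sum_range]
  have h1 : ∀ j ∈ Finset.range (p + 1 - k), (-1 : ℝ)^(k + j) * (p.choose (k + j)) * ((k + j).choose k)
      = ((-1:ℝ)^k * (p.choose k)) * ((-1:ℝ)^j * ((p - k).choose j)) := by
    intro j hj
    rw [Finset.mem_range] at hj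
    have hkj : k + j ≤ p := by omega
    have := Nat.choose_mul (n := p) (k := k + j) (s := k) (Nat.le_add_right _ _)
    rw [Nat.add_sub_cancel_left] at this
    have hc := congrArg (Nat.cast : ℕ → ℝ) this
    push_cast at hc
    rw [mul_assoc, hc, pow_add]
    ring
  rw [Finset.sum_congr rfl h1, ← Finset.mul_sum]
  have h2 : p + 1 - k = (p - k) + 1 := by omega
  rw [h2, alt_real]
  rcases eq_or_lt_of_le hk with h | h
  · subst h
    simp [pow_add]
  · rw [if_neg (by omega), if_neg (by omega)]
    simp



lemma oceanicCoeff_eq (s : ℕ) :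
    oceanicCoeff s = ∑ k ∈ Finset.range (s + 1), (-1 : ℝ)^k * (s.choose k) * (k.factorial) := by
  rw [oceanicCoeff, Finset.mul_sum]
  apply Finset.sum_congr rfl
  intro k hk
  rw [Finset.mem_range] at hk
  have hks : k ≤ s := by omega
  have := Nat.choose_mul_factorial_mul_factorial hks
  have hc := congrArg (Nat.cast : ℕ → ℝ) this
  push_cast at hc
  have hne : ((s - k).factorial : ℝ) ≠ 0 := Nat.cast_ne_zero.mpr (Nat.factorial_ne_zero _)
  field_simp
  rw [← hc]
  ring

-- the key coefficient identity
lemma coeff_sum_id (p : ℕ) :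
    ∑ s ∈ Finset.range (p + 1), (p.choose s : ℝ) * (-1)^(p - s) * oceanicCoeff s
      = (-1 : ℝ)^p * p.factorial := by
  have hsum : ∀ s ∈ Finset.range (p+1), (p.choose s : ℝ) * (-1)^(p - s) * oceanicCoeff s
      = ∑ k ∈ Finset.range (p + 1),
          ((-1:ℝ)^k * k.factorial) * ((-1:ℝ)^p * ((-1:ℝ)^s * (p.choose s) * (s.choose k))) := by
    intro s hs
    rw [Finset.mem_range] at hs
    rw [oceanicCoeff_eq, Finset.mul_sum]
    rw [Finset.sum_subset (Finset.range_subset_range.mpr (by omega : s + 1 ≤ p + 1))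
      (fun k hk hk2 => by
        rw [Finset.mem_range, not_lt] at hk2
        rw [Nat.choose_eq_zero_of_lt (show s < k by omega)]
        simp)]
    · apply Finset.sum_congr rfl
      intro k hk
      have hneg : (-1:ℝ)^(p-s) * (-1:ℝ)^s = (-1:ℝ)^p := by
        rw [← pow_add]; congr 1; omega
      have : (-1:ℝ)^(p-s) = (-1:ℝ)^p * (-1:ℝ)^s := by
        have h2 : ((-1:ℝ)^s) * ((-1:ℝ)^s) = 1 := by
          rw [← pow_add, Even.neg_one_pow ⟨s, rfl⟩]
        calc (-1:ℝ)^(p-s) = (-1:ℝ)^(p-s) * (((-1:ℝ)^s) * ((-1:ℝ)^s)) := by rw [h2, mul_one]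
        _ = (-1:ℝ)^p * (-1:ℝ)^s := by rw [← mul_assoc, hneg]
      rw [this]; ring
  rw [Finset.sum_congr rfl hsum, Finset.sum_comm]
  have : ∀ k ∈ Finset.range (p+1),
      ∑ s ∈ Finset.range (p+1), ((-1:ℝ)^k * k.factorial) * ((-1:ℝ)^p * ((-1:ℝ)^s * (p.choose s) * (s.choose k)))
      = ((-1:ℝ)^k * k.factorial) * ((-1:ℝ)^p * (if k = p then (-1:ℝ)^p else 0)) := by
    intro k hk
    rw [Finset.mem_range] at hk
    rw [← Finset.mul_sum, ← Finset.mul_sum, delta_id p k (by omega)]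
  rw [Finset.sum_congr rfl this, Finset.sum_eq_single p]
  · simp only [if_pos rfl]
    have h2 : ((-1:ℝ)^p) * ((-1:ℝ)^p) = 1 := by
      rw [← pow_add, Even.neg_one_pow ⟨p, rfl⟩]
    calc (-1:ℝ)^p * p.factorial * ((-1:ℝ)^p * (-1:ℝ)^p) = (-1:ℝ)^p * p.factorial := by rw [h2, mul_one]
    _ = (-1:ℝ)^p * p.factorial := rfl
  · intro s hs hsp
    rw [if_neg hsp]; ring
  · intro h
    exact absurd (Finset.self_mem_range_succ p) h



lemma sdiff_sdiff_of_subset' {ι : Type*} [DecidableEq ι] {S U A : Finset ι}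
    (hS : S ⊆ U) (hU : U ⊆ A) : (A \ S) \ (U \ S) = A \ U := by
  ext x
  simp only [Finset.mem_sdiff]
  constructor
  · rintro ⟨⟨hxA, hxS⟩, h2⟩
    refine ⟨hxA, fun hxU => h2 ⟨hxU, hxS⟩⟩
  · rintro ⟨hxA, hxU⟩
    exact ⟨⟨hxA, fun hxS => hxU (hS hxS)⟩, fun h => hxU h.1⟩

lemma powerset_card_sum {ι : Type*} [DecidableEq ι] (U : Finset ι) (f : ℕ → ℝ) :
    ∑ S ∈ U.powerset, f S.card
      = ∑ s ∈ Finset.range (U.card + 1), (U.card.choose s : ℝ) * f s := by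
  rw [Finset.sum_powerset]
  apply Finset.sum_congr rfl
  intro s hs
  rw [Finset.sum_congr rfl (fun S hS => by
      rw [(Finset.mem_powersetCard.mp hS).2]),
    Finset.sum_const, Finset.card_powersetCard, nsmul_eq_mul]

lemma neg_prod {ι : Type*} (T : Finset ι) (r : ι → ℝ) :
    (∏ k ∈ T, (- r k)) = (-1:ℝ)^(T.card) * ∏ k ∈ T, r k := by
  rw [← Finset.prod_const, ← Finset.prod_mul_distrib]
  apply Finset.prod_congr rfl; intro k _; ring

lemma lemB2 {ι : Type*} [DecidableEq ι] (A : Finset ι) (r : ι → ℝ) (αv : ℝ) :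
    ∑ S ∈ A.powerset, oceanicCoeff S.card * (∏ j ∈ S, r j) * ∏ k ∈ A \ S, (αv - r k)
      = ∑ U ∈ A.powerset,
          (-1 : ℝ)^U.card * U.card.factorial * αv^(A.card - U.card) * ∏ j ∈ U, r j := by
  have expand : ∀ S ∈ A.powerset,
      oceanicCoeff S.card * (∏ j ∈ S, r j) * ∏ k ∈ A \ S, (αv - r k)
      = ∑ T ∈ (A \ S).powerset, oceanicCoeff S.card * (∏ j ∈ S, r j) *
          ((∏ k ∈ T, (- r k)) * αv ^ ((A \ S) \ T).card) := by
    intro S _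
    rw [show (∏ k ∈ A \ S, (αv - r k)) = ∏ k ∈ A \ S, ((- r k) + αv) by
        apply Finset.prod_congr rfl; intro k _; ring,
      Finset.prod_add, Finset.mul_sum]
    apply Finset.sum_congr rfl
    intro T _
    rw [Finset.prod_const]
  rw [Finset.sum_congr rfl expand,
    regroup A (fun S T => oceanicCoeff S.card * (∏ j ∈ S, r j) *
      ((∏ k ∈ T, (- r k)) * αv ^ ((A \ S) \ T).card))]
  apply Finset.sum_congr rfl
  intro U hU
  rw [Finset.mem_powerset] at hU
  have inner : ∀ S ∈ U.powerset,
      oceanicCoeff S.card * (∏ j ∈ S, r j) *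
        ((∏ k ∈ U \ S, (- r k)) * αv ^ ((A \ S) \ (U \ S)).card)
      = (αv ^ (A.card - U.card) * ∏ j ∈ U, r j) *
          ((-1:ℝ)^(U.card - S.card) * oceanicCoeff S.card) := by
    intro S hS
    rw [Finset.mem_powerset] at hS
    have hprod : (∏ k ∈ U \ S, r k) * ∏ j ∈ S, r j = ∏ j ∈ U, r j := Finset.prod_sdiff hS
    rw [sdiff_sdiff_of_subset' hS hU, neg_prod, Finset.card_sdiff_of_subset hS, Finset.card_sdiff_of_subset hU, ← hprod]
    ring
  rw [Finset.sum_congr rfl inner, ← Finset.mul_sum,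
    powerset_card_sum U (fun s => (-1:ℝ)^(U.card - s) * oceanicCoeff s)]
  rw [Finset.sum_congr rfl (fun s _ => by
    rw [← mul_assoc] : ∀ s ∈ Finset.range (U.card + 1),
      (U.card.choose s : ℝ) * ((-1:ℝ)^(U.card - s) * oceanicCoeff s)
      = (U.card.choose s : ℝ) * (-1:ℝ)^(U.card - s) * oceanicCoeff s)]
  rw [coeff_sum_id]
  ring



-- linear poly powers
lemma lin_pow (u v : ℝ) (n : ℕ) :
    (C u + C v * X : ℝ[X])^n = (C v)^n * (X + C (u/v))^n ∨ v = 0 := by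
  rcases eq_or_ne v 0 with h | h
  · right; exact h
  · left
    rw [← mul_pow]
    congr 1
    rw [mul_add, ← C_mul, mul_div_cancel₀ _ h]
    ring

lemma lin_coeff (u v : ℝ) (hv : v ≠ 0) (n k : ℕ) :
    ((C u + C v * X : ℝ[X])^n).coeff k = v^n * ((u/v)^(n-k) * n.choose k) := by
  rcases lin_pow u v n with h | h
  · rw [h, ← C_pow, coeff_C_mul, coeff_X_add_C_pow]
  · exact absurd h hv

lemma lemB {ι : Type*} [DecidableEq ι] (A : Finset ι) (r : ι → ℝ) (q ri αv : ℝ)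
    (hα : αv ≠ 0) :
    ∑ S ∈ A.powerset,
      (∫ t in ((q - ri - ∑ j ∈ S, r j)/αv)..((q - ∑ j ∈ S, r j)/αv),
        t^S.card * (1-t)^((A \ S).card))
    = ∑ U ∈ A.powerset,
        (-1 : ℝ)^U.card * U.card.factorial * ri * (∏ j ∈ U, r j) / αv^(U.card+1) := by
  -- Step 1: expand each integral
  have step1 : ∀ S ∈ A.powerset,
      (∫ t in ((q - ri - ∑ j ∈ S, r j)/αv)..((q - ∑ j ∈ S, r j)/αv),
        t^S.card * (1-t)^((A \ S).card))
      = ∑ T ∈ (A \ S).powerset, (-1:ℝ)^T.card *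
          ((((q - ∑ j ∈ S, r j)/αv)^(S.card + T.card + 1)
            - ((q - ri - ∑ j ∈ S, r j)/αv)^(S.card + T.card + 1))
           / ((S.card + T.card : ℝ) + 1)) := by
    intro S _
    have hexp : ∀ t : ℝ, t^S.card * (1-t)^((A \ S).card)
        = ∑ T ∈ (A \ S).powerset, (-1:ℝ)^T.card * t^(S.card + T.card) := by
      intro t
      have : (1-t)^((A \ S).card) = ∏ k ∈ A \ S, ((-t) + 1) := by
        rw [Finset.prod_const]; ring_nf
      rw [this, Finset.prod_add, Finset.mul_sum]
      apply Finset.sum_congr rfl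
      intro T _
      rw [Finset.prod_const, Finset.prod_const, one_pow, mul_one, pow_add]
      ring
    rw [intervalIntegral.integral_congr (g :=
        fun t => ∑ T ∈ (A \ S).powerset, (-1:ℝ)^T.card * t^(S.card + T.card))
        (fun t _ => hexp t)]
    rw [intervalIntegral.integral_finset_sum (fun T _ =>
      ((intervalIntegral.intervalIntegrable_pow _).const_mul _))]
    apply Finset.sum_congr rfl
    intro T _
    rw [intervalIntegral.integral_const_mul, integral_pow]
    push_cast
    ring
  rw [Finset.sum_congr rfl step1,
    regroup A (fun S T => (-1:ℝ)^T.card *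
          ((((q - ∑ j ∈ S, r j)/αv)^(S.card + T.card + 1)
            - ((q - ri - ∑ j ∈ S, r j)/αv)^(S.card + T.card + 1))
           / ((S.card + T.card : ℝ) + 1)))]
  apply Finset.sum_congr rfl
  intro U hU
  rw [Finset.mem_powerset] at hU
  set p := U.card with hp
  -- the polynomial
  set g : ℝ[X] := C (((p:ℝ)+1)⁻¹) *
      ((C (q/αv) + C (-αv⁻¹) * X)^(p+1) - (C ((q-ri)/αv) + C (-αv⁻¹) * X)^(p+1)) with hg
  have hαinv : (-αv⁻¹ : ℝ) ≠ 0 := by simp [hα]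
  have hgcoeff : ∀ k, g.coeff k = (((p:ℝ)+1)⁻¹) *
      ((-αv⁻¹)^(p+1) * ((q/αv/(-αv⁻¹))^(p+1-k) * ((p+1).choose k))
       - (-αv⁻¹)^(p+1) * (((q-ri)/αv/(-αv⁻¹))^(p+1-k) * ((p+1).choose k))) := by
    intro k
    rw [hg, coeff_C_mul, coeff_sub, lin_coeff _ _ hαinv, lin_coeff _ _ hαinv]
  have hdeg : g.natDegree ≤ p := by
    rw [Polynomial.natDegree_le_iff_coeff_eq_zero]
    intro N hN
    rw [hgcoeff N]
    rcases eq_or_lt_of_le (Nat.succ_le_of_lt hN) with h | h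
    · rw [← h]
      simp
    · rw [Nat.choose_eq_zero_of_lt h]
      simp
  have hsimpl : ∀ u : ℝ, u/αv/(-αv⁻¹) = -u := by
    intro u
    field_simp
  have hcoeffp : g.coeff p = (-1:ℝ)^p * ri / αv^(p+1) := by
    rw [hgcoeff p, hsimpl, hsimpl]
    rw [show p + 1 - p = 1 by omega, Nat.choose_succ_self_right]
    rw [neg_pow, pow_succ (-1:ℝ) p]
    have h1 : ((p:ℝ)+1) ≠ 0 := by positivity
    field_simp
    have h3 : (1/αv)^(p+1) * αv^(p+1) = 1 := by
      rw [one_div, inv_pow]; exact inv_mul_cancel₀ (pow_ne_zero _ hα)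
    rw [show (1/αv)^(p+1) * ((p+1 : ℕ) : ℝ) * (q-(q-ri)) * αv^(p+1)
        = ((1/αv)^(p+1) * αv^(p+1)) * ((p+1 : ℕ) : ℝ) * (q-(q-ri)) by ring, h3]
    push_cast; ring
  have heval : ∀ S ∈ U.powerset, (-1:ℝ)^((U \ S).card) *
      ((((q - ∑ j ∈ S, r j)/αv)^(S.card + (U \ S).card + 1)
            - ((q - ri - ∑ j ∈ S, r j)/αv)^(S.card + (U \ S).card + 1))
           / ((S.card + (U \ S).card : ℝ) + 1))
      = (-1:ℝ)^((U \ S).card) * g.eval (∑ j ∈ S, r j) := by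
    intro S hS
    rw [Finset.mem_powerset] at hS
    have hcard : S.card + (U \ S).card = p := by
      rw [hp, ← Finset.card_sdiff_add_card_eq_card hS]; omega
    have hx : g.eval (∑ j ∈ S, r j) = ((p:ℝ)+1)⁻¹ *
        ((q/αv + (-αv⁻¹) * (∑ j ∈ S, r j))^(p+1)
          - ((q-ri)/αv + (-αv⁻¹) * (∑ j ∈ S, r j))^(p+1)) := by
      rw [hg]
      simp only [eval_mul, eval_C, eval_sub, eval_pow, eval_add, eval_X]
    have e1 : (q - ∑ j ∈ S, r j)/αv = q/αv + (-αv⁻¹) * (∑ j ∈ S, r j) := by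
      field_simp
      ring
    have e2 : (q - ri - ∑ j ∈ S, r j)/αv = (q-ri)/αv + (-αv⁻¹) * (∑ j ∈ S, r j) := by
      field_simp
      ring
    have e3 : ((S.card:ℝ) + ((U \ S).card:ℝ) + 1) = (p:ℝ) + 1 := by
      rw [← hcard]; push_cast; ring
    rw [hcard, hx, e1, e2, e3]
    ring
  rw [Finset.sum_congr rfl heval, finite_diff r U _ hdeg, hcoeffp]
  ring



lemma muZ_Iio (t : ℝ) (h0 : 0 ≤ t) (h1 : t ≤ 1) :
    (volume : Measure ℝ).restrict (Set.Icc 0 1) (Set.Iio t) = ENNReal.ofReal t := by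
  rw [Measure.restrict_apply measurableSet_Iio]
  rw [show Set.Iio t ∩ Set.Icc 0 1 = Set.Ico 0 t by
    ext u; simp only [Set.mem_inter_iff, Set.mem_Iio, Set.mem_Icc, Set.mem_Ico]
    constructor
    · rintro ⟨h1, h2, h3⟩; exact ⟨h2, h1⟩
    · rintro ⟨ha, hb⟩; exact ⟨hb, ha, le_trans (le_of_lt hb) h1⟩]
  simp

lemma muZ_Ioi (t : ℝ) (h0 : 0 ≤ t) (h1 : t ≤ 1) :
    (volume : Measure ℝ).restrict (Set.Icc 0 1) (Set.Ioi t) = ENNReal.ofReal (1 - t) := by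
  rw [Measure.restrict_apply measurableSet_Ioi]
  rw [show Set.Ioi t ∩ Set.Icc 0 1 = Set.Ioc t 1 by
    ext u; simp only [Set.mem_inter_iff, Set.mem_Ioi, Set.mem_Icc, Set.mem_Ioc]
    constructor
    · rintro ⟨ha, hb, hc⟩; exact ⟨ha, hc⟩
    · rintro ⟨ha, hb⟩; exact ⟨ha, le_trans h0 (le_of_lt ha), hb⟩]
  simp

lemma measure_tie (n : ℕ) (i k : Fin (n+1)) (hk : k ≠ i) :
    cubeMeasure (n+1) {x | x k = x i} = 0 := by
  set μZ := (volume : Measure ℝ).restrict (Set.Icc 0 1) with hμZ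
  set ν := Measure.pi (fun _ : Fin n => μZ) with hν
  obtain ⟨j0, hj0⟩ := Fin.exists_succAbove_eq hk
  have hmp := measurePreserving_piFinSuccAbove (fun _ : Fin (n+1) => μZ) i
  set e := MeasurableEquiv.piFinSuccAbove (fun _ : Fin (n+1) => ℝ) i with he
  set B : Set (ℝ × (Fin n → ℝ)) := {p | p.2 j0 = p.1} with hB
  have hBmeas : MeasurableSet B :=
    measurableSet_eq_fun (measurable_snd.eval) measurable_fst
  have hpre : {x : Fin (n+1) → ℝ | x k = x i} = e ⁻¹' B := by
    ext x
    simp only [Set.mem_setOf_eq, Set.mem_preimage]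
    show x k = x i ↔ (fun j => x (i.succAbove j)) j0 = x i
    rw [show (fun j => x (i.succAbove j)) j0 = x (i.succAbove j0) from rfl, hj0]
  rw [hpre, show cubeMeasure (n+1) = Measure.pi (fun _ : Fin (n+1) => μZ) from rfl,
    hmp.measure_preimage hBmeas.nullMeasurableSet]
  rw [Measure.prod_apply hBmeas]
  have hslice : ∀ t : ℝ, ν (Prod.mk t ⁻¹' B) = 0 := by
    intro t
    have : Prod.mk t ⁻¹' B = Set.pi Set.univ (fun j => if j = j0 then {t} else Set.univ) := by
      ext y
      simp only [Set.mem_preimage, hB, Set.mem_setOf_eq, Set.mem_pi, Set.mem_univ,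
        forall_true_left]
      constructor
      · intro h j
        by_cases hj : j = j0
        · subst hj; simp [h]
        · simp [hj]
      · intro h
        have := h j0
        simpa using this
    rw [this, hν, Measure.pi_pi]
    apply Finset.prod_eq_zero (Finset.mem_univ j0)
    rw [if_pos rfl, hμZ, Measure.restrict_apply (measurableSet_singleton t)]
    exact measure_mono_null Set.inter_subset_left Real.volume_singleton
  rw [lintegral_congr hslice]
  simp

lemma measure_slab (n : ℕ) (i : Fin (n+1)) (S : Finset (Fin (n+1)))
    (hS : S ⊆ Finset.univ.erase i)
    (a b : ℝ) (h0 : 0 ≤ a) (hab : a ≤ b) (hb1 : b ≤ 1) :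
    cubeMeasure (n+1) {x | (a ≤ x i ∧ x i < b) ∧ (∀ j ∈ S, x j < x i)
        ∧ (∀ k ∈ Finset.univ.erase i \ S, x i < x k)}
      = ENNReal.ofReal (∫ t in a..b, t^S.card * (1-t)^(n - S.card)) := by
  classical
  set μZ := (volume : Measure ℝ).restrict (Set.Icc 0 1) with hμZ
  set ν := Measure.pi (fun _ : Fin n => μZ) with hν
  have hmp := measurePreserving_piFinSuccAbove (fun _ : Fin (n+1) => μZ) i
  set e := MeasurableEquiv.piFinSuccAbove (fun _ : Fin (n+1) => ℝ) i with he
  set B : Set (ℝ × (Fin n → ℝ)) := {p | (a ≤ p.1 ∧ p.1 < b) ∧ ∀ j : Fin n,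
      (i.succAbove j ∈ S → p.2 j < p.1) ∧ (i.succAbove j ∉ S → p.1 < p.2 j)} with hB
  have hBeq : B = ({p : ℝ × (Fin n → ℝ) | a ≤ p.1} ∩ {p | p.1 < b}) ∩
      ⋂ j : Fin n, ({p : ℝ × (Fin n → ℝ) | i.succAbove j ∈ S → p.2 j < p.1} ∩
        {p | i.succAbove j ∉ S → p.1 < p.2 j}) := by
    ext p
    simp only [hB, Set.mem_setOf_eq, Set.mem_inter_iff, Set.mem_iInter]
  have hBmeas : MeasurableSet B := by
    rw [hBeq]
    apply MeasurableSet.inter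
    · exact (measurableSet_le measurable_const measurable_fst).inter
        (measurableSet_lt measurable_fst measurable_const)
    · apply MeasurableSet.iInter
      intro j
      apply MeasurableSet.inter
      · by_cases hj : i.succAbove j ∈ S
        · simp only [hj, forall_true_left]
          exact measurableSet_lt (measurable_snd.eval) measurable_fst
        · simp only [hj, false_implies, IsEmpty.forall_iff]
          exact MeasurableSet.univ
      · by_cases hj : i.succAbove j ∈ S
        · simp only [hj, not_true_eq_false, false_implies, IsEmpty.forall_iff]
          exact MeasurableSet.univ
        · simp only [hj, not_false_eq_true, forall_true_left]
          exact measurableSet_lt measurable_fst (measurable_snd.eval)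
  have hpre : {x : Fin (n+1) → ℝ | (a ≤ x i ∧ x i < b) ∧ (∀ j ∈ S, x j < x i)
      ∧ (∀ k ∈ Finset.univ.erase i \ S, x i < x k)} = e ⁻¹' B := by
    ext x
    simp only [Set.mem_setOf_eq, Set.mem_preimage]
    show _ ↔ (a ≤ x i ∧ x i < b) ∧ ∀ j : Fin n,
      (i.succAbove j ∈ S → x (i.succAbove j) < x i) ∧
      (i.succAbove j ∉ S → x i < x (i.succAbove j))
    constructor
    · rintro ⟨h1, h2, h3⟩
      refine ⟨h1, fun j => ⟨fun hj => h2 _ hj, fun hj => h3 _ ?_⟩⟩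
      rw [Finset.mem_sdiff, Finset.mem_erase]
      exact ⟨⟨Fin.succAbove_ne i j, Finset.mem_univ _⟩, hj⟩
    · rintro ⟨h1, h2⟩
      refine ⟨h1, fun j hj => ?_, fun k hk => ?_⟩
      · have hji : j ≠ i := Finset.ne_of_mem_erase (hS hj)
        obtain ⟨j', hj'⟩ := Fin.exists_succAbove_eq hji
        rw [← hj']
        exact (h2 j').1 (by rw [hj']; exact hj)
      · rw [Finset.mem_sdiff, Finset.mem_erase] at hk
        obtain ⟨j', hj'⟩ := Fin.exists_succAbove_eq hk.1.1
        rw [← hj']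
        exact (h2 j').2 (by rw [hj']; exact hk.2)
  -- filter cardinalities
  have hc1 : (Finset.univ.filter (fun j : Fin n => i.succAbove j ∈ S)).card = S.card := by
    apply Finset.card_bij (fun j _ => i.succAbove j)
    · intro j hj; exact (Finset.mem_filter.mp hj).2
    · intro j1 h1 j2 h2 h
      exact Fin.succAbove_right_injective h
    · intro k hk
      have hki : k ≠ i := Finset.ne_of_mem_erase (hS hk)
      obtain ⟨j', hj'⟩ := Fin.exists_succAbove_eq hki
      exact ⟨j', Finset.mem_filter.mpr ⟨Finset.mem_univ _, by rw [hj']; exact hk⟩, hj'⟩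
  have hc2 : (Finset.univ.filter (fun j : Fin n => ¬ (i.succAbove j ∈ S))).card
      = n - S.card := by
    have := Finset.card_filter_add_card_filter_not
      (s := (Finset.univ : Finset (Fin n))) (fun j => i.succAbove j ∈ S)
    rw [Finset.card_univ, Fintype.card_fin] at this
    omega
  rw [hpre, show cubeMeasure (n+1) = Measure.pi (fun _ : Fin (n+1) => μZ) from rfl,
    hmp.measure_preimage hBmeas.nullMeasurableSet,
    Measure.prod_apply hBmeas]
  have hslice : ∀ t : ℝ, ν (Prod.mk t ⁻¹' B)
      = (Set.Ico a b).indicator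
          (fun t => (ENNReal.ofReal t)^S.card * (ENNReal.ofReal (1-t))^(n - S.card)) t := by
    intro t
    by_cases ht : t ∈ Set.Ico a b
    · rw [Set.indicator_of_mem ht]
      have ht0 : 0 ≤ t := le_trans h0 ht.1
      have ht1 : t ≤ 1 := le_trans (le_of_lt ht.2) hb1
      have hpi : Prod.mk t ⁻¹' B
          = Set.pi Set.univ (fun j => if i.succAbove j ∈ S then Set.Iio t else Set.Ioi t) := by
        ext y
        simp only [Set.mem_preimage, hB, Set.mem_setOf_eq, Set.mem_pi, Set.mem_univ,
          forall_true_left]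
        constructor
        · rintro ⟨-, h2⟩ j
          by_cases hj : i.succAbove j ∈ S
          · rw [if_pos hj]; exact (h2 j).1 hj
          · rw [if_neg hj]; exact (h2 j).2 hj
        · intro h
          refine ⟨⟨ht.1, ht.2⟩, fun j => ⟨fun hj => ?_, fun hj => ?_⟩⟩
          · have := h j; rwa [if_pos hj] at this
          · have := h j; rwa [if_neg hj] at this
      rw [hpi, hν, Measure.pi_pi]
      rw [Finset.prod_congr rfl (fun j _ => by
        by_cases hj : i.succAbove j ∈ S
        · rw [if_pos hj, if_pos hj]
          exact muZ_Iio t ht0 ht1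
        · rw [if_neg hj, if_neg hj]
          exact muZ_Ioi t ht0 ht1 :
        ∀ j ∈ Finset.univ, μZ (if i.succAbove j ∈ S then Set.Iio t else Set.Ioi t)
          = if i.succAbove j ∈ S then ENNReal.ofReal t else ENNReal.ofReal (1-t))]
      rw [Finset.prod_ite, Finset.prod_const, Finset.prod_const, hc1, hc2]
    · rw [Set.indicator_of_notMem ht]
      have hpi : Prod.mk t ⁻¹' B = ∅ := by
        ext y
        simp only [Set.mem_preimage, hB, Set.mem_setOf_eq, Set.mem_empty_iff_false,
          iff_false]
        rintro ⟨h1, -⟩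
        exact ht (Set.mem_Ico.mpr h1)
      rw [hpi]
      exact measure_empty
  rw [lintegral_congr hslice, lintegral_indicator measurableSet_Ico]
  have hres : μZ.restrict (Set.Ico a b) = volume.restrict (Set.Ico a b) := by
    rw [hμZ, Measure.restrict_restrict measurableSet_Ico,
      Set.inter_eq_self_of_subset_left (fun u hu => by
        rw [Set.mem_Ico] at hu
        exact Set.mem_Icc.mpr ⟨le_trans h0 hu.1, le_trans (le_of_lt hu.2) hb1⟩)]
  rw [hres]
  have hcont : Continuous (fun t : ℝ => t^S.card * (1-t)^(n - S.card)) := by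
    fun_prop
  have hint : IntegrableOn (fun t : ℝ => t^S.card * (1-t)^(n - S.card)) (Set.Ico a b) :=
    (hcont.integrableOn_Icc).mono_set Set.Ico_subset_Icc_self
  have hnn : 0 ≤ᵐ[volume.restrict (Set.Ico a b)]
      (fun t : ℝ => t^S.card * (1-t)^(n - S.card)) := by
    have hmem := ae_restrict_mem (μ := volume) measurableSet_Ico (s := Set.Ico a b)
    exact hmem.mono (fun t ht => by
      rw [Set.mem_Ico] at ht
      have ht0 : 0 ≤ t := le_trans h0 ht.1
      have ht1 : t ≤ 1 := le_trans (le_of_lt ht.2) hb1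
      exact mul_nonneg (pow_nonneg ht0 _) (pow_nonneg (by linarith) _))
  rw [setLIntegral_congr_fun measurableSet_Ico (fun t ht => by
    have ht0 : 0 ≤ t := le_trans h0 ht.1
    have ht1 : (0:ℝ) ≤ 1 - t := by
      have := le_trans (le_of_lt ht.2) hb1; linarith
    rw [← ENNReal.ofReal_pow ht0, ← ENNReal.ofReal_pow ht1,
      ← ENNReal.ofReal_mul (pow_nonneg ht0 _)])]
  rw [← MeasureTheory.ofReal_integral_eq_lintegral_ofReal hint hnn]
  congr 1
  rw [intervalIntegral.integral_of_le hab, MeasureTheory.integral_Ico_eq_integral_Ioo,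
    ← MeasureTheory.integral_Ioc_eq_integral_Ioo]






theorem partA (n : ℕ) (α : ℝ) (r : Fin (n+1) → ℝ) (hr : ∀ j, 0 ≤ r j) (hα : 0 < α)
    (hsum : ∑ j, r j < 1 / 2) (hocean : 1 / 2 ≤ α) (i : Fin (n+1)) :
    cubeMeasure (n+1) (pivotEvent (n+1) (1/2) α r i)
      = ∑ S ∈ ((Finset.univ : Finset (Fin (n+1))).erase i).powerset,
          ENNReal.ofReal (∫ t in ((1/2 - r i - ∑ j ∈ S, r j)/α)..((1/2 - ∑ j ∈ S, r j)/α),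
            t^S.card * (1-t)^(n - S.card)) := by
  classical
  set A := (Finset.univ : Finset (Fin (n+1))).erase i with hA
  set G : Finset (Fin (n+1)) → Set (Fin (n+1) → ℝ) := fun S =>
    {x | ((1/2 - r i - ∑ j ∈ S, r j)/α ≤ x i ∧ x i < (1/2 - ∑ j ∈ S, r j)/α)
      ∧ (∀ j ∈ S, x j < x i) ∧ (∀ k ∈ A \ S, x i < x k)} with hG
  -- bounds
  have hbound : ∀ S : Finset (Fin (n+1)), S ⊆ A →
      0 ≤ (1/2 - r i - ∑ j ∈ S, r j)/α
      ∧ (1/2 - r i - ∑ j ∈ S, r j)/α ≤ (1/2 - ∑ j ∈ S, r j)/α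
      ∧ (1/2 - ∑ j ∈ S, r j)/α ≤ 1 := by
    intro S hS
    have hiS : i ∉ S := fun h => (Finset.mem_erase.mp (hS h)).1 rfl
    have hsub : ∑ j ∈ insert i S, r j ≤ ∑ j, r j :=
      Finset.sum_le_sum_of_subset_of_nonneg (Finset.subset_univ _) (fun j _ _ => hr j)
    rw [Finset.sum_insert hiS] at hsub
    have hS0 : 0 ≤ ∑ j ∈ S, r j := Finset.sum_nonneg (fun j _ => hr j)
    have h1 : r i + ∑ j ∈ S, r j < 1/2 := lt_of_le_of_lt hsub hsum
    have hri : 0 ≤ r i := hr i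
    refine ⟨div_nonneg (by linarith) (le_of_lt hα), by gcongr <;> linarith, ?_⟩
    rw [div_le_one hα]
    linarith
  -- sum along cones
  have hsum_eq : ∀ (S : Finset (Fin (n+1))), S ⊆ A → ∀ x : Fin (n+1) → ℝ,
      (∀ j ∈ S, x j < x i) → (∀ k ∈ A \ S, x i < x k) →
      (∑ j, if x j < x i then r j else 0) = ∑ j ∈ S, r j := by
    intro S hSA x h1 h2
    have hpt : ∀ j ∈ Finset.univ, (if x j < x i then r j else 0)
        = if j ∈ S then r j else 0 := by
      intro j _
      by_cases hj : j ∈ S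
      · rw [if_pos (h1 j hj), if_pos hj]
      · rw [if_neg hj]
        by_cases hji : j = i
        · subst hji
          rw [if_neg (lt_irrefl _)]
        · have hjA : j ∈ A \ S := Finset.mem_sdiff.mpr
            ⟨Finset.mem_erase.mpr ⟨hji, Finset.mem_univ _⟩, hj⟩
          rw [if_neg (not_lt.mpr (le_of_lt (h2 j hjA)))]
    rw [Finset.sum_congr rfl hpt, Finset.sum_ite_mem, Finset.univ_inter]
  -- G S is exactly the pivot event intersected with the cone
  have hGeq : ∀ S : Finset (Fin (n+1)), S ⊆ A →
      G S = pivotEvent (n+1) (1/2) α r i ∩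
        {x | (∀ j ∈ S, x j < x i) ∧ (∀ k ∈ A \ S, x i < x k)} := by
    intro S hSA
    ext x
    simp only [hG, Set.mem_setOf_eq, Set.mem_inter_iff, pivotEvent]
    constructor
    · rintro ⟨⟨hxa, hxb⟩, hcone⟩
      refine ⟨⟨?_, ?_⟩, hcone⟩
      · rw [hsum_eq S hSA x hcone.1 hcone.2]
        rw [lt_div_iff₀ hα] at hxb
        linarith
      · rw [hsum_eq S hSA x hcone.1 hcone.2]
        rw [div_le_iff₀ hα] at hxa
        linarith
    · rintro ⟨⟨hx1, hx2⟩, hcone⟩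
      rw [hsum_eq S hSA x hcone.1 hcone.2] at hx1 hx2
      refine ⟨⟨?_, ?_⟩, hcone⟩
      · rw [div_le_iff₀ hα]
        linarith
      · rw [lt_div_iff₀ hα]
        linarith
  -- measurability of G S
  have hGmeas : ∀ S ∈ A.powerset, MeasurableSet (G S) := by
    intro S _
    have : G S = ({x : Fin (n+1) → ℝ | (1/2 - r i - ∑ j ∈ S, r j)/α ≤ x i}
        ∩ {x | x i < (1/2 - ∑ j ∈ S, r j)/α})
        ∩ ⋂ j : Fin (n+1), ({x : Fin (n+1) → ℝ | j ∈ S → x j < x i}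
          ∩ {x | j ∈ A \ S → x i < x j}) := by
      ext x
      simp only [hG, Set.mem_setOf_eq, Set.mem_inter_iff, Set.mem_iInter]
      constructor
      · rintro ⟨h1, h2, h3⟩
        exact ⟨h1, fun j => ⟨fun hj => h2 j hj, fun hj => h3 j hj⟩⟩
      · rintro ⟨h1, h2⟩
        exact ⟨h1, fun j hj => (h2 j).1 hj, fun k hk => (h2 k).2 hk⟩
    rw [this]
    apply MeasurableSet.inter
    · exact (measurableSet_le measurable_const (measurable_pi_apply i)).inter
        (measurableSet_lt (measurable_pi_apply i) measurable_const)
    · apply MeasurableSet.iInter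
      intro j
      apply MeasurableSet.inter
      · by_cases hj : j ∈ S
        · simp only [hj, forall_true_left]
          exact measurableSet_lt (measurable_pi_apply j) (measurable_pi_apply i)
        · simp only [hj, false_implies, IsEmpty.forall_iff]
          exact MeasurableSet.univ
      · by_cases hj : j ∈ A \ S
        · simp only [hj, forall_true_left]
          exact measurableSet_lt (measurable_pi_apply i) (measurable_pi_apply j)
        · simp only [hj, false_implies, IsEmpty.forall_iff]
          exact MeasurableSet.univ
  -- disjointness
  have hdisj : (↑A.powerset : Set (Finset (Fin (n+1)))).PairwiseDisjoint G := by
    intro S hS S' hS' hne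
    rw [Finset.mem_coe, Finset.mem_powerset] at hS hS'
    apply Set.disjoint_left.mpr
    intro x hxS hxS'
    have hss : ¬(S ⊆ S') ∨ ¬(S' ⊆ S) := by
      by_contra h
      push_neg at h
      exact hne (Finset.Subset.antisymm h.1 h.2)
    rcases hss with h | h
    · obtain ⟨j, hjS, hjS'⟩ := Finset.not_subset.mp h
      have h1 : x j < x i := hxS.2.1 j hjS
      have h2 : x i < x j := hxS'.2.2 j (Finset.mem_sdiff.mpr ⟨hS hjS, hjS'⟩)
      linarith
    · obtain ⟨j, hjS', hjS⟩ := Finset.not_subset.mp h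
      have h1 : x j < x i := hxS'.2.1 j hjS'
      have h2 : x i < x j := hxS.2.2 j (Finset.mem_sdiff.mpr ⟨hS' hjS', hjS⟩)
      linarith
  -- null tie set
  set N : Set (Fin (n+1) → ℝ) := ⋃ (k : Fin (n+1)), ⋃ (_ : k ≠ i), {x | x k = x i} with hN
  have hNnull : cubeMeasure (n+1) N = 0 :=
    measure_iUnion_null fun k => measure_iUnion_null fun hk => measure_tie n i k hk
  -- covering
  have hcover : pivotEvent (n+1) (1/2) α r i ⊆ (⋃ S ∈ A.powerset, G S) ∪ N := by
    intro x hx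
    by_cases htie : ∃ k, k ≠ i ∧ x k = x i
    · right
      obtain ⟨k, hk1, hk2⟩ := htie
      exact Set.mem_iUnion.mpr ⟨k, Set.mem_iUnion.mpr ⟨hk1, hk2⟩⟩
    · left
      push_neg at htie
      set S := Finset.univ.filter (fun j : Fin (n+1) => j ≠ i ∧ x j < x i) with hSdef
      have hSA : S ⊆ A := by
        intro j hj
        rw [hSdef, Finset.mem_filter] at hj
        exact Finset.mem_erase.mpr ⟨hj.2.1, Finset.mem_univ _⟩
      have hcone : (∀ j ∈ S, x j < x i) ∧ (∀ k ∈ A \ S, x i < x k) := by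
        constructor
        · intro j hj
          rw [hSdef, Finset.mem_filter] at hj
          exact hj.2.2
        · intro k hk
          rw [Finset.mem_sdiff, hSdef, Finset.mem_filter, Finset.mem_erase] at hk
          obtain ⟨⟨hki, -⟩, hk2⟩ := hk
          have hnlt : ¬ (x k < x i) := fun hlt => hk2 ⟨Finset.mem_univ _, hki, hlt⟩
          exact lt_of_le_of_ne (not_lt.mp hnlt) (fun h => htie k hki h.symm)
      refine Set.mem_biUnion (Finset.mem_powerset.mpr hSA) ?_
      rw [hGeq S hSA]
      exact ⟨hx, hcone⟩
  -- G S ⊆ pivot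
  have hGsub : ∀ S ∈ A.powerset, G S ⊆ pivotEvent (n+1) (1/2) α r i := by
    intro S hS
    rw [hGeq S (Finset.mem_powerset.mp hS)]
    exact Set.inter_subset_left
  -- measure computation
  have hmU : cubeMeasure (n+1) (⋃ S ∈ A.powerset, G S) = ∑ S ∈ A.powerset,
      cubeMeasure (n+1) (G S) := measure_biUnion_finset hdisj hGmeas
  have hle : cubeMeasure (n+1) (pivotEvent (n+1) (1/2) α r i)
      ≤ cubeMeasure (n+1) (⋃ S ∈ A.powerset, G S) := by
    calc cubeMeasure (n+1) (pivotEvent (n+1) (1/2) α r i)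
        ≤ cubeMeasure (n+1) ((⋃ S ∈ A.powerset, G S) ∪ N) := measure_mono hcover
      _ ≤ cubeMeasure (n+1) (⋃ S ∈ A.powerset, G S) + cubeMeasure (n+1) N :=
          measure_union_le _ _
      _ = cubeMeasure (n+1) (⋃ S ∈ A.powerset, G S) := by rw [hNnull, add_zero]
  have hge : cubeMeasure (n+1) (⋃ S ∈ A.powerset, G S)
      ≤ cubeMeasure (n+1) (pivotEvent (n+1) (1/2) α r i) :=
    measure_mono (Set.iUnion₂_subset hGsub)
  have hmain : cubeMeasure (n+1) (pivotEvent (n+1) (1/2) α r i)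
      = ∑ S ∈ A.powerset, cubeMeasure (n+1) (G S) := by
    rw [← hmU]
    exact le_antisymm hle hge
  rw [hmain]
  apply Finset.sum_congr rfl
  intro S hS
  rw [Finset.mem_powerset] at hS
  obtain ⟨hb0, hbab, hbb1⟩ := hbound S hS
  exact measure_slab n i S hS _ _ hb0 hbab hbb1

/-- Milnor–Shapley formula for the value of a major miner when the ocean holds a majority. -/
theorem stmt_0 (m : ℕ) (α : ℝ) (r : Fin m → ℝ) (hr : ∀ j, 0 ≤ r j) (hα : 0 < α)
    (hsum : ∑ j, r j < 1 / 2) (hocean : 1 / 2 ≤ α) (i : Fin m) :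
    minerValue m (1 / 2) α r i =
      r i / α ^ m *
        ∑ S ∈ ((Finset.univ : Finset (Fin m)).erase i).powerset,
          oceanicCoeff S.card * (∏ j ∈ S, r j) *
            ∏ k ∈ ((Finset.univ : Finset (Fin m)).erase i) \ S, (α - r k) := by
  classical
  obtain ⟨n, rfl⟩ : ∃ n, m = n + 1 := ⟨m - 1, by have := i.pos; omega⟩
  set A := (Finset.univ : Finset (Fin (n+1))).erase i with hA
  have hAcard : A.card = n := by
    rw [hA, Finset.card_erase_of_mem (Finset.mem_univ i), Finset.card_univ,
      Fintype.card_fin]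
    omega
  have hbound : ∀ S : Finset (Fin (n+1)), S ⊆ A →
      0 ≤ (1/2 - r i - ∑ j ∈ S, r j)/α
      ∧ (1/2 - r i - ∑ j ∈ S, r j)/α ≤ (1/2 - ∑ j ∈ S, r j)/α
      ∧ (1/2 - ∑ j ∈ S, r j)/α ≤ 1 := by
    intro S hS
    have hiS : i ∉ S := fun h => (Finset.mem_erase.mp (hS h)).1 rfl
    have hsub : ∑ j ∈ insert i S, r j ≤ ∑ j, r j :=
      Finset.sum_le_sum_of_subset_of_nonneg (Finset.subset_univ _) (fun j _ _ => hr j)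
    rw [Finset.sum_insert hiS] at hsub
    have hS0 : 0 ≤ ∑ j ∈ S, r j := Finset.sum_nonneg (fun j _ => hr j)
    have h1 : r i + ∑ j ∈ S, r j < 1/2 := lt_of_le_of_lt hsub hsum
    have hri : 0 ≤ r i := hr i
    refine ⟨div_nonneg (by linarith) (le_of_lt hα), by gcongr <;> linarith, ?_⟩
    rw [div_le_one hα]
    linarith
  have hstep1 : minerValue (n+1) (1/2) α r i
      = ∑ S ∈ A.powerset,
          (∫ t in ((1/2 - r i - ∑ j ∈ S, r j)/α)..((1/2 - ∑ j ∈ S, r j)/α),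
            t^S.card * (1-t)^((A \ S).card)) := by
    rw [minerValue, partA n α r hr hα hsum hocean i,
      ENNReal.toReal_sum (fun S _ => ENNReal.ofReal_ne_top)]
    apply Finset.sum_congr rfl
    intro S hS
    rw [Finset.mem_powerset] at hS
    obtain ⟨hb0, hbab, hbb1⟩ := hbound S hS
    have hcard : n - S.card = (A \ S).card := by
      rw [Finset.card_sdiff_of_subset hS, hAcard]
    rw [← hcard]
    rw [ENNReal.toReal_ofReal]
    apply intervalIntegral.integral_nonneg hbab
    intro t ht
    rw [Set.mem_Icc] at ht
    have ht0 : 0 ≤ t := le_trans hb0 ht.1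
    have ht1 : t ≤ 1 := le_trans ht.2 hbb1
    exact mul_nonneg (pow_nonneg ht0 _) (pow_nonneg (by linarith) _)
  rw [hstep1, lemB A r (1/2) (r i) α (ne_of_gt hα), lemB2 A r α, Finset.mul_sum]
  apply Finset.sum_congr rfl
  intro U hU
  rw [Finset.mem_powerset] at hU
  have hUcard : U.card ≤ n := by
    have := Finset.card_le_card hU
    omega
  simp only [hAcard]
  have hpow : α ^ (n+1) = α^(n - U.card) * α^(U.card+1) := by
    rw [← pow_add]
    congr 1
    omega
  rw [hpow]
  have h1 : α^(n - U.card) ≠ 0 := pow_ne_zero _ (ne_of_gt hα)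
  have h2 : α^(U.card + 1) ≠ 0 := pow_ne_zero _ (ne_of_gt hα)
  field_simp
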